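/- Let m ≥ 3 and k ≥ 1, and let S ⊆ (ℤ/mℤ)^k be a finite set such that no two distinct vectors of S differ by an element of {0, 1}^k (where 0 and 1 denote the images of the integers 0 and 1 in ℤ/mℤ). Then the direct power D_m^k of the dihedral group D_m = ⟨x, y | x^m = y² = 1, yxy = x⁻¹⟩ realizes ⟨2^k, 2^k, |S|⟩: the subgroups ⟨y⟩^k and ⟨yx⟩^k (each of order 2^k) together with the subset {(x^{s₁}, …, x^{s_k}) : (s₁, …, s_k) ∈ S} of ⟨x⟩^k satisfy the triple product property. -/

import Mathlib

open DihedralGroup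

open DihedralGroup

lemma my_sr_inv {m : ℕ} (a : ZMod m) : (sr a : DihedralGroup m)⁻¹ = sr a :=
  inv_eq_of_mul_eq_one_right (sr_mul_self a)

lemma my_r_inv {m : ℕ} (a : ZMod m) : (r a : DihedralGroup m)⁻¹ = r (-a) :=
  inv_eq_of_mul_eq_one_right (by rw [r_mul_r, add_neg_cancel, one_def])

lemma pair_quot {m : ℕ} (c : ZMod m) {a b : DihedralGroup m}
    (ha : a = 1 ∨ a = sr c) (hb : b = 1 ∨ b = sr c) :
    a * b⁻¹ = 1 ∨ a * b⁻¹ = sr c := by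
  rcases ha with rfl | rfl <;> rcases hb with rfl | rfl <;>
    simp [my_sr_inv, sr_mul_self, ← one_def]

lemma coord {m : ℕ} {a b : DihedralGroup m} {w : ZMod m}
    (ha : a = 1 ∨ a = sr 0) (hb : b = 1 ∨ b = sr 1)
    (h : a * b * r w = 1) :
    (w = 0 ∧ a = 1 ∧ b = 1) ∨ (1 + w = 0 ∧ a = sr 0 ∧ b = sr 1) := by
  rcases ha with rfl | rfl <;> rcases hb with rfl | rfl <;>
    simp_all [one_def, r_mul_r, sr_mul_r, sr_mul_sr, r_mul_sr, -r_zero]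

lemma pair_set_eq {m k : ℕ} (a : ZMod m) :
    {g : Fin k → DihedralGroup m | ∀ i, g i = 1 ∨ g i = sr a}
      = Set.pi Set.univ (fun _ => ({1, sr a} : Set (DihedralGroup m))) := by
  ext g; simp [Set.mem_pi]

lemma pair_card {m k : ℕ} (a : ZMod m) :
    ({g : Fin k → DihedralGroup m | ∀ i, g i = 1 ∨ g i = sr a}).ncard = 2 ^ k := by
  rw [pair_set_eq, ← Nat.card_coe_set_eq, Nat.card_congr (Equiv.Set.univPi _),
    Nat.card_pi]
  have h2 : Nat.card ({1, sr a} : Set (DihedralGroup m)) = 2 := by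
    rw [Nat.card_coe_set_eq, Set.ncard_pair (by simp [one_def, -r_zero])]
  simp only [h2, Finset.prod_const, Finset.card_univ, Fintype.card_fin]

def dK (m k : ℕ) (a : ZMod m) : Subgroup (Fin k → DihedralGroup m) where
  carrier := {g | ∀ i, g i = 1 ∨ g i = sr a}
  one_mem' := fun _ => Or.inl rfl
  mul_mem' := by
    intro g h hg hh i
    rcases hg i with h1 | h1 <;> rcases hh i with h2 | h2 <;>
      simp [Pi.mul_apply, h1, h2, sr_mul_self, ← one_def]
  inv_mem' := by
    intro g hg i
    rcases hg i with h1 | h1 <;> simp [Pi.inv_apply, h1, my_sr_inv]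


/-- The right quotient set `Q(S) = {s₁s₂⁻¹ : s₁, s₂ ∈ S}` of a subset of a group. -/
def rightQuotient {G : Type*} [Group G] (S : Set G) : Set G :=
  {g | ∃ s₁ ∈ S, ∃ s₂ ∈ S, g = s₁ * s₂⁻¹}

/-- Subsets `S₁, S₂, S₃` of a group satisfy the triple product property if whenever
`qᵢ ∈ Q(Sᵢ)` and `q₁q₂q₃ = 1`, we have `q₁ = q₂ = q₃ = 1`. -/
def TPP {G : Type*} [Group G] (S₁ S₂ S₃ : Set G) : Prop :=
  ∀ q₁ ∈ rightQuotient S₁, ∀ q₂ ∈ rightQuotient S₂, ∀ q₃ ∈ rightQuotient S₃,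
    q₁ * q₂ * q₃ = 1 → q₁ = 1 ∧ q₂ = 1 ∧ q₃ = 1

/-- A group `G` realizes `⟨n₁, n₂, n₃⟩` if there are finite subsets `Sᵢ ⊆ G` with
`|Sᵢ| = nᵢ` satisfying the triple product property. -/
def Realizes (G : Type*) [Group G] (n₁ n₂ n₃ : ℕ) : Prop :=
  ∃ S₁ S₂ S₃ : Set G, S₁.Finite ∧ S₂.Finite ∧ S₃.Finite ∧
    S₁.ncard = n₁ ∧ S₂.ncard = n₂ ∧ S₃.ncard = n₃ ∧ TPP S₁ S₂ S₃

/-- The subgroup `⟨y⟩^k` of `D_m^k` (as a set), where `y = sr 0`. -/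
def dT₁ (m k : ℕ) : Set (Fin k → DihedralGroup m) :=
  {g | ∀ i : Fin k, g i = 1 ∨ g i = DihedralGroup.sr 0}

/-- The subgroup `⟨yx⟩^k` of `D_m^k` (as a set), where `yx = sr 1`. -/
def dT₂ (m k : ℕ) : Set (Fin k → DihedralGroup m) :=
  {g | ∀ i : Fin k, g i = 1 ∨ g i = DihedralGroup.sr 1}

/-- The subset `{(x^{s₁}, …, x^{s_k}) : s ∈ S}` of `⟨x⟩^k ⊆ D_m^k`. -/
def dT₃ (m k : ℕ) (S : Set (Fin k → ZMod m)) : Set (Fin k → DihedralGroup m) :=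
  {g | ∃ s ∈ S, g = fun i => DihedralGroup.r (s i)}


def rmap (m k : ℕ) : (Fin k → ZMod m) → (Fin k → DihedralGroup m) :=
  fun s i => r (s i)

lemma dT₃_eq (m k : ℕ) (S : Set (Fin k → ZMod m)) :
    dT₃ m k S = rmap m k '' S := by
  ext g; constructor <;> rintro ⟨s, hs, rfl⟩ <;> exact ⟨s, hs, rfl⟩

lemma r_pi_inj (m k : ℕ) : Function.Injective (rmap m k) := by
  intro u v h
  funext i
  have := congrFun h i
  simpa [rmap] using this

lemma tpp_main (m k : ℕ) (hm : 3 ≤ m) (S : Set (Fin k → ZMod m))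
    (hS : ∀ u ∈ S, ∀ v ∈ S, (∀ i : Fin k, u i - v i = 0 ∨ u i - v i = 1) → u = v) :
    TPP (dT₁ m k) (dT₂ m k) (dT₃ m k S) := by
  haveI : Fact (1 < m) := ⟨by omega⟩
  rintro q₁ ⟨g₁, hg₁, h₁, hh₁, rfl⟩ q₂ ⟨g₂, hg₂, h₂, hh₂, rfl⟩
    q₃ ⟨-, ⟨u, hu, rfl⟩, -, ⟨v, hv, rfl⟩, rfl⟩ heq
  -- coordinatewise analysis
  have key : ∀ i : Fin k,
      (u i - v i = 0 ∧ g₁ i * (h₁ i)⁻¹ = 1 ∧ g₂ i * (h₂ i)⁻¹ = 1) ∨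
      (1 + (u i - v i) = 0 ∧ g₁ i * (h₁ i)⁻¹ = sr 0 ∧ g₂ i * (h₂ i)⁻¹ = sr 1) := by
    intro i
    have h := congrFun heq i
    simp only [Pi.mul_apply, Pi.inv_apply, Pi.one_apply] at h
    rw [my_r_inv, r_mul_r, ← sub_eq_add_neg] at h
    exact coord (pair_quot 0 (hg₁ i) (hh₁ i)) (pair_quot 1 (hg₂ i) (hh₂ i)) h
  have huv : u = v := by
    refine (hS v hv u hu fun i => ?_).symm
    rcases key i with ⟨h0, -, -⟩ | ⟨h1', -, -⟩
    · left; linear_combination -h0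
    · right; linear_combination -h1'
  subst huv
  have key2 : ∀ i : Fin k, g₁ i * (h₁ i)⁻¹ = 1 ∧ g₂ i * (h₂ i)⁻¹ = 1 := by
    intro i
    rcases key i with ⟨-, ha, hb⟩ | ⟨h1', -, -⟩
    · exact ⟨ha, hb⟩
    · exfalso
      rw [sub_self, add_zero] at h1'
      exact one_ne_zero h1'
  refine ⟨funext fun i => ?_, funext fun i => ?_, by simp⟩
  · exact (key2 i).1
  · exact (key2 i).2

theorem stmt_18 (m k : ℕ) (hm : 3 ≤ m) (hk : 1 ≤ k)
    (S : Set (Fin k → ZMod m)) (hSfin : S.Finite)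
    (hS : ∀ u ∈ S, ∀ v ∈ S, (∀ i : Fin k, u i - v i = 0 ∨ u i - v i = 1) → u = v) :
    (∃ K₁ K₂ : Subgroup (Fin k → DihedralGroup m),
      (K₁ : Set (Fin k → DihedralGroup m)) = dT₁ m k ∧
      (K₂ : Set (Fin k → DihedralGroup m)) = dT₂ m k) ∧
    (dT₁ m k).ncard = 2 ^ k ∧ (dT₂ m k).ncard = 2 ^ k ∧ (dT₃ m k S).ncard = S.ncard ∧
    TPP (dT₁ m k) (dT₂ m k) (dT₃ m k S) ∧
    Realizes (Fin k → DihedralGroup m) (2 ^ k) (2 ^ k) S.ncard := by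
  haveI : NeZero m := ⟨by omega⟩
  have card3 : (dT₃ m k S).ncard = S.ncard := by
    rw [dT₃_eq, Set.ncard_image_of_injective _ (r_pi_inj m k)]
  refine ⟨⟨dK m k 0, dK m k 1, rfl, rfl⟩, pair_card 0, pair_card 1, card3,
    tpp_main m k hm S hS, ?_⟩
  exact ⟨dT₁ m k, dT₂ m k, dT₃ m k S, Set.toFinite _, Set.toFinite _, Set.toFinite _,
    pair_card 0, pair_card 1, card3, tpp_main m k hm S hS⟩
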